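/- Let n ≥ 1, let Pₙ be the path graph on vertices Δ = {α₁,…,αₙ}, and let J₀ ⊆ Δ. For any interval [U,W] of the lattice Λ*(Pₙ,J₀), the following are equivalent: (1) [U,W] is relatively complemented; (2) [U,W] is atomic, i.e. every element of [U,W] is a join of atoms of [U,W]; (3) [U,W] is order-isomorphic to the Boolean lattice of all subsets of a set with |W| − |U| elements. -/

import Mathlib

open SimpleGraph Finset

/-- `ReachIn G U a b` : `b` is reachable from `a` within the subgraph of `G`
induced on the vertex set `U`. -/
def ReachIn {n : ℕ} (G : SimpleGraph (Fin n)) (U : Finset (Fin n)) (a b : Fin n) : Prop :=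
  Relation.ReflTransGen (fun x y => G.Adj x y ∧ x ∈ U ∧ y ∈ U) a b

/-- `U` is admissible (with respect to `J₀`) if no connected component of the
subgraph of `G` induced on `U` is entirely contained in `J₀`: every component
contains a vertex outside `J₀`. -/
def Admissible {n : ℕ} (G : SimpleGraph (Fin n)) (J₀ U : Finset (Fin n)) : Prop :=
  ∀ a ∈ U, ∃ b, ReachIn G U a b ∧ b ∉ J₀

/-- A subset `A` is connected if the induced subgraph on `A` is connected. -/
def ConnIn {n : ℕ} (G : SimpleGraph (Fin n)) (A : Finset (Fin n)) : Prop :=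
  ∀ a ∈ A, ∀ b ∈ A, ReachIn G A a b

theorem ReachIn.mono {n : ℕ} {G : SimpleGraph (Fin n)} {U V : Finset (Fin n)} (h : U ⊆ V)
    {a b : Fin n} (hr : ReachIn G U a b) : ReachIn G V a b := by
  unfold ReachIn at hr ⊢
  induction hr with
  | refl => exact Relation.ReflTransGen.refl
  | tail _ hxy ih => exact ih.tail ⟨hxy.1, h hxy.2.1, h hxy.2.2⟩

theorem admissible_empty {n : ℕ} (G : SimpleGraph (Fin n)) (J₀ : Finset (Fin n)) :
    Admissible G J₀ ∅ := fun a ha => absurd ha (Finset.notMem_empty a)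

theorem admissible_union {n : ℕ} {G : SimpleGraph (Fin n)} {J₀ U V : Finset (Fin n)}
    (hU : Admissible G J₀ U) (hV : Admissible G J₀ V) : Admissible G J₀ (U ∪ V) := by
  intro a ha
  rcases Finset.mem_union.mp ha with h | h
  · obtain ⟨b, hb, hbJ⟩ := hU a h
    exact ⟨b, hb.mono Finset.subset_union_left, hbJ⟩
  · obtain ⟨b, hb, hbJ⟩ := hV a h
    exact ⟨b, hb.mono Finset.subset_union_right, hbJ⟩

/-- `Λ*(G, J₀)` : the poset of admissible subsets, ordered by inclusion. -/
def CrossSection {n : ℕ} (G : SimpleGraph (Fin n)) (J₀ : Finset (Fin n)) : Type :=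
  {U : Finset (Fin n) // Admissible G J₀ U}

namespace CrossSection

variable {n : ℕ} {G : SimpleGraph (Fin n)} {J₀ : Finset (Fin n)}

instance : PartialOrder (CrossSection G J₀) :=
  inferInstanceAs (PartialOrder {U : Finset (Fin n) // Admissible G J₀ U})

instance : DecidableEq (CrossSection G J₀) :=
  inferInstanceAs (DecidableEq {U : Finset (Fin n) // Admissible G J₀ U})

noncomputable instance : Fintype (CrossSection G J₀) :=
  Fintype.ofInjective (Subtype.val : CrossSection G J₀ → Finset (Fin n)) Subtype.val_injective

open Classical in
/-- The underlying set of the meet of two admissible sets: the largest admissible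
subset contained in the intersection. -/
noncomputable def meetFinset (G : SimpleGraph (Fin n)) (J₀ : Finset (Fin n))
    (U V : Finset (Fin n)) : Finset (Fin n) :=
  ((U ∩ V).powerset.filter (fun W => Admissible G J₀ W)).sup id

theorem admissible_sup {s : Finset (Finset (Fin n))}
    (h : ∀ W ∈ s, Admissible G J₀ W) : Admissible G J₀ (s.sup id) :=
  Finset.sup_induction (by simpa using admissible_empty G J₀)
    (fun a ha b hb => by simpa using admissible_union ha hb) h

theorem admissible_meetFinset (G : SimpleGraph (Fin n)) (J₀ U V : Finset (Fin n)) :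
    Admissible G J₀ (meetFinset G J₀ U V) := by
  classical
  exact admissible_sup (fun W hW => (Finset.mem_filter.mp hW).2)

theorem meetFinset_subset_left (G : SimpleGraph (Fin n)) (J₀ U V : Finset (Fin n)) :
    meetFinset G J₀ U V ≤ U := by
  classical
  unfold meetFinset
  refine Finset.sup_le (fun W hW => ?_)
  have := Finset.mem_powerset.mp (Finset.mem_filter.mp hW).1
  exact fun x hx => (Finset.mem_inter.mp (this hx)).1

theorem meetFinset_subset_right (G : SimpleGraph (Fin n)) (J₀ U V : Finset (Fin n)) :
    meetFinset G J₀ U V ≤ V := by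
  classical
  unfold meetFinset
  refine Finset.sup_le (fun W hW => ?_)
  have := Finset.mem_powerset.mp (Finset.mem_filter.mp hW).1
  exact fun x hx => (Finset.mem_inter.mp (this hx)).2

theorem subset_meetFinset {G : SimpleGraph (Fin n)} {J₀ U V W : Finset (Fin n)}
    (hW : Admissible G J₀ W) (h1 : W ⊆ U) (h2 : W ⊆ V) : W ≤ meetFinset G J₀ U V := by
  classical
  unfold meetFinset
  exact Finset.le_sup (f := id)
    (Finset.mem_filter.mpr ⟨Finset.mem_powerset.mpr (Finset.subset_inter h1 h2), hW⟩)

noncomputable instance : Lattice (CrossSection G J₀) :=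
  { (inferInstance : PartialOrder (CrossSection G J₀)) with
    sup := fun U V => ⟨U.1 ∪ V.1, admissible_union U.2 V.2⟩
    le_sup_left := fun U V => show U.1 ⊆ U.1 ∪ V.1 from Finset.subset_union_left
    le_sup_right := fun U V => show V.1 ⊆ U.1 ∪ V.1 from Finset.subset_union_right
    sup_le := fun U V W h1 h2 => show U.1 ∪ V.1 ⊆ W.1 from Finset.union_subset h1 h2
    inf := fun U V => ⟨meetFinset G J₀ U.1 V.1, admissible_meetFinset G J₀ U.1 V.1⟩
    inf_le_left := fun U V => meetFinset_subset_left G J₀ U.1 V.1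
    inf_le_right := fun U V => meetFinset_subset_right G J₀ U.1 V.1
    le_inf := fun W U V h1 h2 => subset_meetFinset W.2 h1 h2 }

instance : OrderBot (CrossSection G J₀) where
  bot := ⟨∅, admissible_empty G J₀⟩
  bot_le := fun U => show (∅ : Finset (Fin n)) ⊆ U.1 from Finset.empty_subset _

@[simp] theorem sup_val (U V : CrossSection G J₀) : (U ⊔ V).1 = U.1 ∪ V.1 := rfl

@[simp] theorem inf_val (U V : CrossSection G J₀) : (U ⊓ V).1 = meetFinset G J₀ U.1 V.1 := rfl

end CrossSection

/-- The interval `[u,w]` is relatively complemented: for every subinterval `[x,y]`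
and every `z` in it there is a relative complement `z'`. -/
def RelCompInterval {α : Type*} [Lattice α] (u w : α) : Prop :=
  ∀ x y z : α, u ≤ x → x ≤ z → z ≤ y → y ≤ w →
    ∃ z', x ≤ z' ∧ z' ≤ y ∧ z ⊔ z' = y ∧ z ⊓ z' = x

namespace PathAux

variable {n : ℕ}

/-- interval connectivity predicate -/
def Conn' (a : Finset (Fin n)) (x y : Fin n) : Prop :=
  ∀ z : Fin n, min x.1 y.1 ≤ z.1 → z.1 ≤ max x.1 y.1 → z ∈ a

theorem Conn'.mem_left {a : Finset (Fin n)} {x y : Fin n} (h : Conn' a x y) : x ∈ a :=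
  h x (by omega) (by omega)

theorem Conn'.mem_right {a : Finset (Fin n)} {x y : Fin n} (h : Conn' a x y) : y ∈ a :=
  h y (by omega) (by omega)

theorem Conn'.symm {a : Finset (Fin n)} {x y : Fin n} (h : Conn' a x y) : Conn' a y x :=
  fun z h1 h2 => h z (by omega) (by omega)

theorem Conn'.trans {a : Finset (Fin n)} {x y z : Fin n} (h1 : Conn' a x y)
    (h2 : Conn' a y z) : Conn' a x z := by
  intro t ht1 ht2
  by_cases hc : min x.1 y.1 ≤ t.1 ∧ t.1 ≤ max x.1 y.1
  · exact h1 t hc.1 hc.2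
  · rcases not_and_or.mp hc with h | h <;> exact h2 t (by omega) (by omega)

theorem Conn'.mono {a b : Finset (Fin n)} (hab : a ⊆ b) {x y : Fin n} (h : Conn' a x y) :
    Conn' b x y := fun z h1 h2 => hab (h z h1 h2)

theorem conn_erase {a : Finset (Fin n)} {w x y : Fin n} (hc : Conn' a x y)
    (hw : w.1 < min x.1 y.1 ∨ max x.1 y.1 < w.1) : Conn' (a.erase w) x y := by
  intro z h1 h2
  refine Finset.mem_erase.mpr ⟨fun h => ?_, hc z h1 h2⟩
  subst h; omega

theorem reach_of_conn_aux (a : Finset (Fin n)) :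
    ∀ d (x y : Fin n), (x.1 + d = y.1 ∨ y.1 + d = x.1) → Conn' a x y →
      ReachIn (pathGraph n) a x y := by
  intro d
  induction d with
  | zero =>
    intro x y h _
    have : x = y := Fin.ext (by omega)
    exact this ▸ Relation.ReflTransGen.refl
  | succ d ih =>
    intro x y h hc
    rcases h with h | h
    · have hxl : x.1 + 1 < n := by have := y.isLt; omega
      set x' : Fin n := ⟨x.1 + 1, hxl⟩ with hx'
      have hx'v : x'.1 = x.1 + 1 := rfl
      refine Relation.ReflTransGen.head
        ⟨SimpleGraph.pathGraph_adj.mpr (Or.inl rfl), hc x (by omega) (by omega),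
          hc x' (by omega) (by omega)⟩ (ih x' y (by omega) ?_)
      intro z h1 h2; exact hc z (by omega) (by omega)
    · have hxl : 1 ≤ x.1 := by omega
      set x' : Fin n := ⟨x.1 - 1, by have := x.isLt; omega⟩ with hx'
      have hx'v : x'.1 = x.1 - 1 := rfl
      refine Relation.ReflTransGen.head
        ⟨SimpleGraph.pathGraph_adj.mpr (Or.inr (by omega)), hc x (by omega) (by omega),
          hc x' (by omega) (by omega)⟩ (ih x' y (by omega) ?_)
      intro z h1 h2; exact hc z (by omega) (by omega)

theorem reach_iff (a : Finset (Fin n)) (x y : Fin n) :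
    ReachIn (pathGraph n) a x y ↔ x = y ∨ Conn' a x y := by
  constructor
  · intro hr
    induction hr with
    | refl => exact Or.inl rfl
    | @tail b c hxb hbc IH =>
      obtain ⟨hadj, hba, hca⟩ := hbc
      have hbc' : b.1 + 1 = c.1 ∨ c.1 + 1 = b.1 := SimpleGraph.pathGraph_adj.mp hadj
      rcases IH with rfl | hconn
      · refine Or.inr (fun z h1 h2 => ?_)
        have : z.1 = x.1 ∨ z.1 = c.1 := by omega
        rcases this with h | h
        · exact (Fin.ext h : z = x) ▸ hba
        · exact (Fin.ext h : z = c) ▸ hca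
      · refine Or.inr (fun z h1 h2 => ?_)
        by_cases hz : z.1 = c.1
        · exact (Fin.ext hz : z = c) ▸ hca
        · have hxb' : x ∈ a := hconn.mem_left
          exact hconn z (by omega) (by omega)
  · rintro (rfl | hc)
    · exact Relation.ReflTransGen.refl
    · exact reach_of_conn_aux a (max x.1 y.1 - min x.1 y.1) x y (by omega) hc


open Classical in
theorem exists_good_erase {n : ℕ} {J₀ : Finset (Fin n)} {U a : Finset (Fin n)}
    (hU : Admissible (pathGraph n) J₀ U) (ha : Admissible (pathGraph n) J₀ a)
    (hsub : U ⊆ a) (hne : U ≠ a) :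
    ∃ w ∈ a, w ∉ U ∧ Admissible (pathGraph n) J₀ (a.erase w) := by
  have hS : (a \ U).Nonempty := by
    rw [Finset.sdiff_nonempty]
    intro h
    exact hne (Finset.Subset.antisymm hsub h)
  obtain ⟨v₀, hv₀⟩ := hS
  set T : Finset (Fin n) := (a \ U).filter (fun s => s = v₀ ∨ Conn' a v₀ s) with hTdef
  have hv₀T : v₀ ∈ T := Finset.mem_filter.mpr ⟨hv₀, Or.inl rfl⟩
  have hTne : T.Nonempty := ⟨v₀, hv₀T⟩
  have hTsub : T ⊆ a \ U := Finset.filter_subset _ _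
  -- closure of T under connectivity
  have hTc : ∀ s ∈ T, ∀ x, Conn' a s x → x ∉ U → x ∈ T := by
    intro s hs x hcx hxU
    refine Finset.mem_filter.mpr ⟨Finset.mem_sdiff.mpr ⟨hcx.mem_right, hxU⟩, ?_⟩
    rcases (Finset.mem_filter.mp hs).2 with rfl | hc
    · exact Or.inr hcx
    · exact Or.inr (hc.trans hcx)
  have hTT : ∀ s ∈ T, ∀ t ∈ T, s = t ∨ Conn' a s t := by
    intro s hs t ht
    rcases (Finset.mem_filter.mp hs).2 with rfl | hcs
    · rcases (Finset.mem_filter.mp ht).2 with rfl | hct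
      · exact Or.inl rfl
      · exact Or.inr hct
    · rcases (Finset.mem_filter.mp ht).2 with rfl | hct
      · exact Or.inr hcs.symm
      · exact Or.inr (hcs.symm.trans hct)
  set w₂ : Fin n := T.max' hTne with hw₂def
  set w₁ : Fin n := T.min' hTne with hw₁def
  have hw₂T : w₂ ∈ T := T.max'_mem hTne
  have hw₁T : w₁ ∈ T := T.min'_mem hTne
  have hw₂a : w₂ ∈ a := (Finset.mem_sdiff.mp (hTsub hw₂T)).1
  have hw₂U : w₂ ∉ U := (Finset.mem_sdiff.mp (hTsub hw₂T)).2
  have hw₁a : w₁ ∈ a := (Finset.mem_sdiff.mp (hTsub hw₁T)).1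
  have hw₁U : w₁ ∉ U := (Finset.mem_sdiff.mp (hTsub hw₁T)).2
  have hw12 : w₁.1 ≤ w₂.1 := T.min'_le w₂ hw₂T
  by_cases hcaseA : ∃ g ∈ a, g ∉ J₀ ∧ g.1 < w₂.1 ∧ Conn' a g w₂
  · -- remove w₂
    refine ⟨w₂, hw₂a, hw₂U, ?_⟩
    intro x hx
    obtain ⟨hxw, hxa⟩ := Finset.mem_erase.mp hx
    obtain ⟨b, hrb, hbJ⟩ := ha x hxa
    rcases (reach_iff a x b).mp hrb with rfl | hcb
    · exact ⟨x, Relation.ReflTransGen.refl, hbJ⟩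
    · by_cases hbet : min x.1 b.1 ≤ w₂.1 ∧ w₂.1 ≤ max x.1 b.1
      · have hxw₂ : Conn' a x w₂ := fun z h1 h2 => hcb z (by omega) (by omega)
        have hxvne : x.1 ≠ w₂.1 := fun h => hxw (Fin.ext h)
        rcases Nat.lt_or_ge w₂.1 x.1 with hgt | hge
        · -- x to the right of w₂, so x ∈ U
          have hxU : x ∈ U := by
            by_contra hxU
            have hxT : x ∈ T := hTc w₂ hw₂T x hxw₂.symm hxU
            have := T.le_max' x hxT
            omega
          obtain ⟨b', hrb', hb'J⟩ := hU x hxU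
          rcases (reach_iff U x b').mp hrb' with rfl | hcb'
          · exact ⟨x, Relation.ReflTransGen.refl, hb'J⟩
          · have hbw : w₂.1 < b'.1 := by
              by_contra hle
              push_neg at hle
              exact hw₂U (hcb' w₂ (by omega) (by omega))
            refine ⟨b', (reach_iff _ x b').mpr (Or.inr ?_), hb'J⟩
            exact conn_erase (hcb'.mono hsub) (Or.inl (by omega))
        · -- x to the left of w₂, use witness g
          obtain ⟨g, hga, hgJ, hglt, hgc⟩ := hcaseA
          refine ⟨g, (reach_iff _ x g).mpr (Or.inr ?_), hgJ⟩
          intro z h1 h2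
          refine Finset.mem_erase.mpr ⟨fun h => by subst h; omega, ?_⟩
          by_cases hz : min x.1 w₂.1 ≤ z.1 ∧ z.1 ≤ max x.1 w₂.1
          · exact hxw₂ z hz.1 hz.2
          · rcases not_and_or.mp hz with h | h <;> exact hgc z (by omega) (by omega)
      · refine ⟨b, (reach_iff _ x b).mpr (Or.inr (conn_erase hcb ?_)), hbJ⟩
        rcases not_and_or.mp hbet with h | h
        · exact Or.inl (by omega)
        · exact Or.inr (by omega)
  · -- remove w₁
    push_neg at hcaseA
    have hB : ∀ g ∈ a, g ∉ J₀ → g.1 < w₂.1 → Conn' a g w₂ → False := by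
      intro g hg hgJ hlt hc
      exact (hcaseA g hg hgJ hlt) hc
    refine ⟨w₁, hw₁a, hw₁U, ?_⟩
    intro x hx
    obtain ⟨hxw, hxa⟩ := Finset.mem_erase.mp hx
    obtain ⟨b, hrb, hbJ⟩ := ha x hxa
    rcases (reach_iff a x b).mp hrb with rfl | hcb
    · exact ⟨x, Relation.ReflTransGen.refl, hbJ⟩
    · by_cases hbet : min x.1 b.1 ≤ w₁.1 ∧ w₁.1 ≤ max x.1 b.1
      · have hxw₁ : Conn' a x w₁ := fun z h1 h2 => hcb z (by omega) (by omega)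
        have hxvne : x.1 ≠ w₁.1 := fun h => hxw (Fin.ext h)
        have hxw₂ : Conn' a x w₂ := by
          rcases hTT w₁ hw₁T w₂ hw₂T with h | h
          · exact h ▸ hxw₁
          · exact hxw₁.trans h
        rcases Nat.lt_or_ge x.1 w₁.1 with hlt | hge
        · -- x strictly left of w₁ : contradiction
          exfalso
          have hxU : x ∈ U := by
            by_contra hxU
            have hxT : x ∈ T := hTc w₁ hw₁T x hxw₁.symm hxU
            have := T.min'_le x hxT
            omega
          obtain ⟨b', hrb', hb'J⟩ := hU x hxU
          rcases (reach_iff U x b').mp hrb' with rfl | hcb'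
          · exact hB x hxa hb'J (by omega) hxw₂
          · have hbw : b'.1 < w₁.1 := by
              by_contra hle
              push_neg at hle
              exact hw₁U (hcb' w₁ (by omega) (by omega))
            exact hB b' (hsub hcb'.mem_right) hb'J (by omega)
              ((hcb'.mono hsub).symm.trans hxw₂)
        · -- x strictly right of w₁
          have hgt : w₁.1 < x.1 := by omega
          have hbl : b.1 ≤ w₁.1 := by omega
          have hbge : w₂.1 ≤ b.1 := by
            by_contra hle
            push_neg at hle
            exact hB b hcb.mem_right hbJ hle (hcb.symm.trans hxw₂)
          have hweq : w₁.1 = w₂.1 := by omega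
          have hxU : x ∈ U := by
            by_contra hxU
            have hxT : x ∈ T := hTc w₁ hw₁T x hxw₁.symm hxU
            have h1 := T.min'_le x hxT
            have h2 := T.le_max' x hxT
            omega
          obtain ⟨b', hrb', hb'J⟩ := hU x hxU
          rcases (reach_iff U x b').mp hrb' with rfl | hcb'
          · exact ⟨x, Relation.ReflTransGen.refl, hb'J⟩
          · have hnb : ¬(min x.1 b'.1 ≤ w₁.1 ∧ w₁.1 ≤ max x.1 b'.1) :=
              fun h => hw₁U (hcb' w₁ h.1 h.2)
            refine ⟨b', (reach_iff _ x b').mpr (Or.inr (conn_erase (hcb'.mono hsub) ?_)), hb'J⟩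
            rcases not_and_or.mp hnb with h | h
            · exact Or.inl (by omega)
            · exact Or.inr (by omega)
      · refine ⟨b, (reach_iff _ x b).mpr (Or.inr (conn_erase hcb ?_)), hbJ⟩
        rcases not_and_or.mp hbet with h | h
        · exact Or.inl (by omega)
        · exact Or.inr (by omega)

open CrossSection

variable {J₀ : Finset (Fin n)}

theorem val_sup {G : SimpleGraph (Fin n)} (S : Finset (CrossSection G J₀)) :
    (S.sup id).1 = S.sup (fun a => a.1) := by
  classical
  induction S using Finset.induction_on with
  | empty => rfl
  | @insert a S ha ih => rw [Finset.sup_insert, Finset.sup_insert, ← ih]; rfl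

theorem le_iff_subset {G : SimpleGraph (Fin n)} {U V : CrossSection G J₀} :
    U ≤ V ↔ U.1 ⊆ V.1 := Iff.rfl

theorem lt_iff_lt {G : SimpleGraph (Fin n)} {U V : CrossSection G J₀} :
    U < V ↔ U.1 ⊂ V.1 :=
  lt_iff_le_and_ne.trans (by
    rw [Finset.ssubset_iff_subset_ne]
    exact and_congr Iff.rfl (not_congr ⟨fun h => by rw [h], fun h => Subtype.ext h⟩))

/-- Every cover in the cross-section lattice of a path adds exactly one vertex. -/
theorem cover_single {U a : CrossSection (pathGraph n) J₀} (hcov : U ⋖ a) :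
    ∃ v, v ∈ a.1 ∧ v ∉ U.1 ∧ a.1 = insert v U.1 := by
  have hlt : U.1 ⊂ a.1 := lt_iff_lt.mp hcov.lt
  obtain ⟨w, hwa, hwU, hadm⟩ := exists_good_erase U.2 a.2 hlt.subset
    (fun h => hlt.ne h)
  set c : CrossSection (pathGraph n) J₀ := ⟨a.1.erase w, hadm⟩ with hc
  have hUc : U ≤ c := le_iff_subset.mpr (Finset.subset_erase.mpr ⟨hlt.subset, hwU⟩)
  have hca : c < a := lt_iff_lt.mpr (Finset.erase_ssubset hwa)
  have hUeq : U = c := by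
    by_contra hne
    exact hcov.2 (lt_of_le_of_ne hUc hne) hca
  refine ⟨w, hwa, hwU, ?_⟩
  have : U.1 = a.1.erase w := congrArg Subtype.val hUeq
  rw [this, Finset.insert_erase hwa]

theorem exists_atom_aux : ∀ m (z : CrossSection (pathGraph n) J₀), z.1.card ≤ m →
    ∀ U : CrossSection (pathGraph n) J₀, U ≤ z → U ≠ z →
      ∃ a, U ⋖ a ∧ a ≤ z := by
  intro m
  induction m with
  | zero =>
    intro z hz U hle hne
    exfalso
    have hzempty : z.1 = ∅ := Finset.card_eq_zero.mp (Nat.le_zero.mp hz)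
    apply hne
    apply Subtype.ext
    rw [hzempty]
    exact Finset.subset_empty.mp (hzempty ▸ le_iff_subset.mp hle)
  | succ m ih =>
    intro z hz U hle hne
    obtain ⟨w, hwz, hwU, hadm⟩ := exists_good_erase U.2 z.2 (le_iff_subset.mp hle)
      (fun h => hne (Subtype.ext h))
    set c : CrossSection (pathGraph n) J₀ := ⟨z.1.erase w, hadm⟩ with hc
    have hUc : U ≤ c := le_iff_subset.mpr
      (Finset.subset_erase.mpr ⟨le_iff_subset.mp hle, hwU⟩)
    have hcz : c < z := lt_iff_lt.mpr (Finset.erase_ssubset hwz)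
    by_cases heq : U = c
    · refine ⟨z, ⟨lt_of_le_of_ne hle hne, ?_⟩, le_refl z⟩
      intro d hUd hdz
      have h1 : U.1.card < d.1.card := Finset.card_lt_card (lt_iff_lt.mp hUd)
      have h2 : d.1.card < z.1.card := Finset.card_lt_card (lt_iff_lt.mp hdz)
      have h3 : U.1.card = z.1.card - 1 := by
        rw [heq]; exact (Finset.card_erase_of_mem hwz)
      have h4 : 1 ≤ z.1.card := Finset.card_pos.mpr ⟨w, hwz⟩
      omega
    · have hcard : c.1.card ≤ m := by
        have := Finset.card_erase_of_mem hwz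
        have h4 : 1 ≤ z.1.card := Finset.card_pos.mpr ⟨w, hwz⟩
        simp only [hc]
        omega
      obtain ⟨a, hcov, haz⟩ := ih c hcard U hUc heq
      exact ⟨a, hcov, le_trans haz (le_of_lt hcz)⟩

theorem exists_atom {U z : CrossSection (pathGraph n) J₀} (hle : U ≤ z) (hne : U ≠ z) :
    ∃ a, U ⋖ a ∧ a ≤ z :=
  exists_atom_aux z.1.card z le_rfl U hle hne

/-- The key intermediate condition: every single vertex of `W \ U` can be added
to `U` admissibly. -/
def Star (J₀ : Finset (Fin n)) (U W : CrossSection (pathGraph n) J₀) : Prop :=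
  ∀ v ∈ W.1, v ∉ U.1 → Admissible (pathGraph n) J₀ (insert v U.1)

theorem star_union {U W : CrossSection (pathGraph n) J₀} (hUW : U ≤ W)
    (hstar : Star J₀ U W) :
    ∀ T ⊆ W.1 \ U.1, Admissible (pathGraph n) J₀ (U.1 ∪ T) := by
  classical
  intro T
  induction T using Finset.induction_on with
  | empty => intro _; simpa using U.2
  | @insert a T ha ih =>
    intro hsub
    have h1 : a ∈ W.1 \ U.1 := hsub (Finset.mem_insert_self a T)
    have heq : U.1 ∪ insert a T = (insert a U.1) ∪ (U.1 ∪ T) := by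
      ext x
      simp only [Finset.mem_union, Finset.mem_insert]
      tauto
    rw [heq]
    exact admissible_union
      (hstar a (Finset.mem_sdiff.mp h1).1 (Finset.mem_sdiff.mp h1).2)
      (ih (fun x hx => hsub (Finset.mem_insert_of_mem hx)))

/-- singleton covers -/
theorem single_cover {U : CrossSection (pathGraph n) J₀} {v : Fin n} (hv : v ∉ U.1)
    (hadm : Admissible (pathGraph n) J₀ (insert v U.1)) :
    U ⋖ (⟨insert v U.1, hadm⟩ : CrossSection (pathGraph n) J₀) := by
  constructor
  · exact lt_iff_lt.mpr (Finset.ssubset_insert hv)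
  · intro c hUc hca
    have h1 : U.1.card < c.1.card := Finset.card_lt_card (lt_iff_lt.mp hUc)
    have h2 : c.1.card < (insert v U.1).card := Finset.card_lt_card (lt_iff_lt.mp hca)
    rw [Finset.card_insert_of_notMem hv] at h2
    omega

theorem star_end {U : CrossSection (pathGraph n) J₀} {v : Fin n}
    (h : ∃ a : CrossSection (pathGraph n) J₀, (U ⋖ a) ∧ v ∈ a.1) (hvU : v ∉ U.1) :
    Admissible (pathGraph n) J₀ (insert v U.1) := by
  obtain ⟨a, hcov, hva⟩ := h
  obtain ⟨w, hwa, hwU, heq⟩ := cover_single hcov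
  have : v = w := by
    have := heq ▸ hva
    rcases Finset.mem_insert.mp this with h | h
    · exact h
    · exact absurd h hvU
  subst this
  exact heq ▸ a.2

/-- The atomicity condition from the theorem statement. -/
def Atomic (J₀ : Finset (Fin n)) (U W : CrossSection (pathGraph n) J₀) : Prop :=
  ∀ z : CrossSection (pathGraph n) J₀, U ≤ z → z ≤ W →
    ∃ S : Finset (CrossSection (pathGraph n) J₀),
      (∀ a ∈ S, U ⋖ a ∧ a ≤ W) ∧ z = U ⊔ S.sup id

theorem star_of_atomic {U W : CrossSection (pathGraph n) J₀} (hUW : U ≤ W)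
    (h : Atomic J₀ U W) : Star J₀ U W := by
  classical
  intro v hvW hvU
  obtain ⟨S, hS, hWeq⟩ := h W hUW le_rfl
  have hv : v ∈ U.1 ∪ (S.sup id).1 := by
    have : v ∈ (U ⊔ S.sup id).1 := hWeq ▸ hvW
    simpa using this
  rcases Finset.mem_union.mp hv with h1 | h1
  · exact absurd h1 hvU
  · rw [val_sup] at h1
    obtain ⟨a, haS, hva⟩ := Finset.mem_sup.mp h1
    exact star_end ⟨a, (hS a haS).1, hva⟩ hvU

theorem atomic_of_star {U W : CrossSection (pathGraph n) J₀} (hUW : U ≤ W)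
    (hstar : Star J₀ U W) : Atomic J₀ U W := by
  classical
  intro z hUz hzW
  have hadm : ∀ v ∈ z.1 \ U.1, Admissible (pathGraph n) J₀ (insert v U.1) := by
    intro v hv
    exact hstar v (le_iff_subset.mp hzW (Finset.mem_sdiff.mp hv).1)
      (Finset.mem_sdiff.mp hv).2
  set S : Finset (CrossSection (pathGraph n) J₀) :=
    (z.1 \ U.1).attach.image
      (fun v => (⟨insert v.1 U.1, hadm v.1 v.2⟩ : CrossSection (pathGraph n) J₀)) with hSdef
  refine ⟨S, ?_, ?_⟩
  · intro a haS
    obtain ⟨v, hv, rfl⟩ := Finset.mem_image.mp haS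
    constructor
    · exact single_cover (Finset.mem_sdiff.mp v.2).2 _
    · refine le_iff_subset.mpr (Finset.insert_subset ?_ (le_iff_subset.mp hUW))
      exact le_iff_subset.mp hzW (Finset.mem_sdiff.mp v.2).1
  · apply Subtype.ext
    show z.1 = (U ⊔ S.sup id).1
    rw [sup_val, val_sup]
    apply Finset.Subset.antisymm
    · intro x hx
      by_cases hxU : x ∈ U.1
      · exact Finset.mem_union_left _ hxU
      · refine Finset.mem_union_right _ (Finset.mem_sup.mpr ?_)
        refine ⟨⟨insert x U.1, hadm x (Finset.mem_sdiff.mpr ⟨hx, hxU⟩)⟩, ?_,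
          Finset.mem_insert_self x U.1⟩
        exact Finset.mem_image.mpr ⟨⟨x, Finset.mem_sdiff.mpr ⟨hx, hxU⟩⟩,
          Finset.mem_attach _ _, rfl⟩
    · refine Finset.union_subset (le_iff_subset.mp hUz) ?_
      intro x hx
      obtain ⟨a, haS, hxa⟩ := Finset.mem_sup.mp hx
      obtain ⟨v, hv, rfl⟩ := Finset.mem_image.mp haS
      rcases Finset.mem_insert.mp hxa with rfl | h
      · exact (Finset.mem_sdiff.mp v.2).1
      · exact le_iff_subset.mp hUz h

theorem star_of_relcomp {U W : CrossSection (pathGraph n) J₀} (hUW : U ≤ W)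
    (h : RelCompInterval U W) : Star J₀ U W := by
  classical
  set A : Finset (CrossSection (pathGraph n) J₀) :=
    Finset.univ.filter (fun a => U ⋖ a ∧ a ≤ W) with hAdef
  set m : CrossSection (pathGraph n) J₀ := U ⊔ A.sup id with hmdef
  have hUm : U ≤ m := le_sup_left
  have hmW : m ≤ W := by
    refine sup_le hUW (Finset.sup_le ?_)
    intro a ha
    exact ((Finset.mem_filter.mp ha).2).2
  have hmeq : m = W := by
    obtain ⟨z', hUz', hz'W, hsup, hinf⟩ := h U W m le_rfl hUm hmW le_rfl
    by_cases hz'U : z' = U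
    · rw [hz'U, sup_comm] at hsup
      rwa [sup_eq_right.mpr hUm] at hsup
    · obtain ⟨a, hcov, haz'⟩ := exists_atom hUz' (fun hh => hz'U hh.symm)
      exfalso
      have haA : a ∈ A := Finset.mem_filter.mpr
        ⟨Finset.mem_univ _, hcov, le_trans haz' hz'W⟩
      have ham : a ≤ m := le_trans (Finset.le_sup (f := id) haA) le_sup_right
      have haU : a ≤ U := hinf ▸ le_inf ham haz'
      exact hcov.lt.ne (le_antisymm hcov.lt.le haU)
  intro v hvW hvU
  have hv : v ∈ U.1 ∪ (A.sup id).1 := by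
    have h0 : v ∈ m.1 := hmeq ▸ hvW
    rw [hmdef] at h0
    simpa using h0
  rcases Finset.mem_union.mp hv with h1 | h1
  · exact absurd h1 hvU
  · rw [val_sup] at h1
    obtain ⟨a, haA, hva⟩ := Finset.mem_sup.mp h1
    exact star_end ⟨a, ((Finset.mem_filter.mp haA).2).1, hva⟩ hvU

theorem relcomp_of_star {U W : CrossSection (pathGraph n) J₀} (hUW : U ≤ W)
    (hstar : Star J₀ U W) : RelCompInterval U W := by
  classical
  intro x y z hUx hxz hzy hyW
  set B : Finset (Fin n) := x.1 ∪ (y.1 \ z.1) with hBdef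
  have hxW : x.1 ⊆ W.1 := le_iff_subset.mp (le_trans hxz (le_trans hzy hyW))
  have hyW' : y.1 ⊆ W.1 := le_iff_subset.mp hyW
  have hUB : U.1 ⊆ B := fun t ht => Finset.mem_union_left _ (le_iff_subset.mp hUx ht)
  have hBW : B ⊆ W.1 :=
    Finset.union_subset hxW (fun t ht => hyW' (Finset.mem_sdiff.mp ht).1)
  have hadmB : Admissible (pathGraph n) J₀ B := by
    have h1 : U.1 ∪ (B \ U.1) = B := Finset.union_sdiff_of_subset hUB
    have h2 : B \ U.1 ⊆ W.1 \ U.1 := fun t ht =>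
      Finset.mem_sdiff.mpr ⟨hBW (Finset.mem_sdiff.mp ht).1, (Finset.mem_sdiff.mp ht).2⟩
    rw [← h1]
    exact star_union hUW hstar _ h2
  set z' : CrossSection (pathGraph n) J₀ := ⟨B, hadmB⟩ with hz'def
  have hxz' : x ≤ z' := le_iff_subset.mpr Finset.subset_union_left
  have hz'y : z' ≤ y := le_iff_subset.mpr (Finset.union_subset
    (le_iff_subset.mp (le_trans hxz hzy)) (fun t ht => (Finset.mem_sdiff.mp ht).1))
  refine ⟨z', hxz', hz'y, ?_, ?_⟩
  · apply Subtype.ext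
    show z.1 ∪ B = y.1
    apply Finset.Subset.antisymm
    · exact Finset.union_subset (le_iff_subset.mp hzy) (le_iff_subset.mp hz'y)
    · intro t ht
      by_cases htz : t ∈ z.1
      · exact Finset.mem_union_left _ htz
      · exact Finset.mem_union_right _
          (Finset.mem_union_right _ (Finset.mem_sdiff.mpr ⟨ht, htz⟩))
  · apply le_antisymm
    · have h1 : (z ⊓ z').1 ⊆ z.1 := le_iff_subset.mp inf_le_left
      have h2 : (z ⊓ z').1 ⊆ B := le_iff_subset.mp inf_le_right
      refine le_iff_subset.mpr (fun t ht => ?_)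
      rcases Finset.mem_union.mp (h2 ht) with h | h
      · exact h
      · exact absurd (h1 ht) (Finset.mem_sdiff.mp h).2
    · exact le_inf hxz hxz'

theorem boolean_of_star {U W : CrossSection (pathGraph n) J₀} (hUW : U ≤ W)
    (hstar : Star J₀ U W) :
    Nonempty (Set.Icc U W ≃o Finset (Fin (W.1.card - U.1.card))) := by
  classical
  set k : ℕ := W.1.card - U.1.card with hk
  set D : Finset (Fin n) := W.1 \ U.1 with hD
  have hDcard : D.card = k := Finset.card_sdiff_of_subset (le_iff_subset.mp hUW)
  set e := D.orderIsoOfFin hDcard with he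
  have hmem : ∀ (z : Set.Icc U W), U ≤ z.1 ∧ z.1 ≤ W := fun z => Set.mem_Icc.mp z.2
  have hadm : ∀ T : Finset (Fin k),
      Admissible (pathGraph n) J₀ (U.1 ∪ T.image (fun i => ((e i : {x // x ∈ D}) : Fin n))) := by
    intro T
    refine star_union hUW hstar _ ?_
    intro t ht
    obtain ⟨i, _, rfl⟩ := Finset.mem_image.mp ht
    exact (e i).2
  set F : Set.Icc U W → Finset (Fin k) :=
    fun z => Finset.univ.filter (fun i => ((e i : {x // x ∈ D}) : Fin n) ∈ z.1.1) with hF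
  set Bk : Finset (Fin k) → Set.Icc U W := fun T =>
    ⟨⟨U.1 ∪ T.image (fun i => ((e i : {x // x ∈ D}) : Fin n)), hadm T⟩,
      Set.mem_Icc.mpr ⟨le_iff_subset.mpr Finset.subset_union_left,
        le_iff_subset.mpr (Finset.union_subset (le_iff_subset.mp hUW)
          (fun t ht => by
            obtain ⟨i, _, rfl⟩ := Finset.mem_image.mp ht
            exact (Finset.mem_sdiff.mp (e i).2).1))⟩⟩ with hBk
  have hDne : ∀ i : Fin k, ((e i : {x // x ∈ D}) : Fin n) ∉ U.1 :=
    fun i => (Finset.mem_sdiff.mp (e i).2).2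
  have left_inv : Function.LeftInverse Bk F := by
    intro z
    apply Subtype.ext
    apply Subtype.ext
    show U.1 ∪ _ = z.1.1
    apply Finset.Subset.antisymm
    · refine Finset.union_subset (le_iff_subset.mp (hmem z).1) ?_
      intro t ht
      obtain ⟨i, hi, rfl⟩ := Finset.mem_image.mp ht
      exact (Finset.mem_filter.mp hi).2
    · intro t ht
      by_cases htU : t ∈ U.1
      · exact Finset.mem_union_left _ htU
      · have htD : t ∈ D := Finset.mem_sdiff.mpr
          ⟨le_iff_subset.mp (hmem z).2 ht, htU⟩
        refine Finset.mem_union_right _ (Finset.mem_image.mpr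
          ⟨e.symm ⟨t, htD⟩, ?_, by rw [OrderIso.apply_symm_apply]⟩)
        refine Finset.mem_filter.mpr ⟨Finset.mem_univ _, ?_⟩
        rw [OrderIso.apply_symm_apply]
        exact ht
  have right_inv : Function.RightInverse Bk F := by
    intro T
    ext i
    simp only [hF, Finset.mem_filter, Finset.mem_univ, true_and]
    constructor
    · intro hi
      rcases Finset.mem_union.mp hi with h | h
      · exact absurd h (hDne i)
      · obtain ⟨j, hj, hji⟩ := Finset.mem_image.mp h
        have : (e j : {x // x ∈ D}) = e i := Subtype.ext hji
        have : j = i := e.injective this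
        exact this ▸ hj
    · intro hi
      exact Finset.mem_union_right _ (Finset.mem_image.mpr ⟨i, hi, rfl⟩)
  refine ⟨⟨⟨F, Bk, left_inv, right_inv⟩, ?_⟩⟩
  intro z₁ z₂
  show F z₁ ⊆ F z₂ ↔ z₁ ≤ z₂
  constructor
  · intro h
    show z₁.1 ≤ z₂.1
    refine le_iff_subset.mpr (fun t ht => ?_)
    by_cases htU : t ∈ U.1
    · exact le_iff_subset.mp (hmem z₂).1 htU
    · have htD : t ∈ D := Finset.mem_sdiff.mpr
        ⟨le_iff_subset.mp (hmem z₁).2 ht, htU⟩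
      have hi : e.symm ⟨t, htD⟩ ∈ F z₁ := by
        refine Finset.mem_filter.mpr ⟨Finset.mem_univ _, ?_⟩
        rw [OrderIso.apply_symm_apply]
        exact ht
      have h2 := (Finset.mem_filter.mp (h hi)).2
      rw [OrderIso.apply_symm_apply] at h2
      exact h2
  · intro h i hi
    have hm := Finset.mem_filter.mp hi
    exact Finset.mem_filter.mpr ⟨Finset.mem_univ _,
      le_iff_subset.mp (show z₁.1 ≤ z₂.1 from h) hm.2⟩

theorem star_of_boolean {U W : CrossSection (pathGraph n) J₀} (hUW : U ≤ W)
    (h : Nonempty (Set.Icc U W ≃o Finset (Fin (W.1.card - U.1.card)))) :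
    Star J₀ U W := by
  classical
  obtain ⟨φ⟩ := h
  set k : ℕ := W.1.card - U.1.card with hk
  set D : Finset (Fin n) := W.1 \ U.1 with hD
  have hDcard : D.card = k := Finset.card_sdiff_of_subset (le_iff_subset.mp hUW)
  set f : Set.Icc U W → {T : Finset (Fin n) // T ∈ D.powerset} := fun z =>
    ⟨z.1.1 \ U.1, Finset.mem_powerset.mpr (fun t ht => Finset.mem_sdiff.mpr
      ⟨le_iff_subset.mp (Set.mem_Icc.mp z.2).2 (Finset.mem_sdiff.mp ht).1,
        (Finset.mem_sdiff.mp ht).2⟩)⟩ with hf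
  have hinj : Function.Injective f := by
    intro z₁ z₂ hz
    have hval : z₁.1.1 \ U.1 = z₂.1.1 \ U.1 := congrArg Subtype.val hz
    apply Subtype.ext
    apply Subtype.ext
    have h1 : U.1 ∪ (z₁.1.1 \ U.1) = z₁.1.1 :=
      Finset.union_sdiff_of_subset (le_iff_subset.mp (Set.mem_Icc.mp z₁.2).1)
    have h2 : U.1 ∪ (z₂.1.1 \ U.1) = z₂.1.1 :=
      Finset.union_sdiff_of_subset (le_iff_subset.mp (Set.mem_Icc.mp z₂.2).1)
    rw [← h1, ← h2, hval]
  have hcard : Nat.card (Set.Icc U W) = Nat.card {T : Finset (Fin n) // T ∈ D.powerset} := by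
    rw [Nat.card_congr φ.toEquiv]
    rw [Nat.card_eq_fintype_card, Nat.card_eq_fintype_card, Fintype.card_finset,
      Fintype.card_fin, Fintype.card_coe, Finset.card_powerset, hDcard]
  have hbij : Function.Bijective f :=
    (Nat.bijective_iff_injective_and_card f).mpr ⟨hinj, hcard⟩
  intro v hvW hvU
  have hvD : v ∈ D := Finset.mem_sdiff.mpr ⟨hvW, hvU⟩
  obtain ⟨z, hz⟩ := hbij.2 ⟨{v}, Finset.mem_powerset.mpr (Finset.singleton_subset_iff.mpr hvD)⟩
  have hval : z.1.1 \ U.1 = {v} := congrArg Subtype.val hz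
  have hzeq : z.1.1 = insert v U.1 := by
    have h1 : U.1 ∪ (z.1.1 \ U.1) = z.1.1 :=
      Finset.union_sdiff_of_subset (le_iff_subset.mp (Set.mem_Icc.mp z.2).1)
    rw [← h1, hval]
    ext t
    simp only [Finset.mem_union, Finset.mem_singleton, Finset.mem_insert]
    tauto
  exact hzeq ▸ z.1.2

end PathAux

theorem stmt_6 (n : ℕ) (hn : 1 ≤ n) (J₀ : Finset (Fin n))
    (U W : CrossSection (pathGraph n) J₀) (hUW : U ≤ W) :
    (RelCompInterval U W ↔
      ∀ z : CrossSection (pathGraph n) J₀, U ≤ z → z ≤ W →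
        ∃ S : Finset (CrossSection (pathGraph n) J₀),
          (∀ a ∈ S, U ⋖ a ∧ a ≤ W) ∧ z = U ⊔ S.sup id) ∧
    ((∀ z : CrossSection (pathGraph n) J₀, U ≤ z → z ≤ W →
        ∃ S : Finset (CrossSection (pathGraph n) J₀),
          (∀ a ∈ S, U ⋖ a ∧ a ≤ W) ∧ z = U ⊔ S.sup id) ↔
      Nonempty (Set.Icc U W ≃o Finset (Fin (W.1.card - U.1.card)))) := by
  constructor
  · exact ⟨fun h => PathAux.atomic_of_star hUW (PathAux.star_of_relcomp hUW h),
      fun h => PathAux.relcomp_of_star hUW (PathAux.star_of_atomic hUW h)⟩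
  · exact ⟨fun h => PathAux.boolean_of_star hUW (PathAux.star_of_atomic hUW h),
      fun h => PathAux.atomic_of_star hUW (PathAux.star_of_boolean hUW h)⟩
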